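/- Let ν > 0 and let y : ℝ → ℝ be continuous, bounded and Lebesgue integrable. Then z(x) = (1/(2√ν)) ∫_ℝ exp(−√ν·|x − t|)·y(t) dt is twice continuously differentiable and satisfies ν·z(x) − z''(x) = y(x) for every x ∈ ℝ. -/

import Mathlib

open MeasureTheory

private lemma my_integral_Ici_sub_Ici {f : ℝ → ℝ} {a b : ℝ}
    (ha : IntegrableOn f (Set.Ici a)) (hb : IntegrableOn f (Set.Ici b)) :
    (∫ x in Set.Ici a, f x) - ∫ x in Set.Ici b, f x = ∫ x in a..b, f x := by
  wlog hab : a ≤ b generalizing a b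
  · rw [intervalIntegral.integral_symm, ← this hb ha (le_of_not_ge hab), neg_sub]
  rw [sub_eq_iff_eq_add, intervalIntegral.integral_of_le hab]
  have hs : Set.Ici a = Set.Ico a b ∪ Set.Ici b := (Set.Ico_union_Ici_eq_Ici hab).symm
  rw [hs, setIntegral_union (Set.disjoint_left.mpr fun x hx hx' => hx.2.not_ge hx')
      measurableSet_Ici (ha.mono_set Set.Ico_subset_Ici_self) hb,
    integral_Ico_eq_integral_Ioo, integral_Ioc_eq_integral_Ioo, add_comm]

theorem resolvent_kernel_solves_equation
    (ν : ℝ) (hν : 0 < ν) (y : ℝ → ℝ)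
    (hyc : Continuous y) (hyb : ∃ M : ℝ, ∀ x : ℝ, |y x| ≤ M) (hyi : Integrable y)
    (z : ℝ → ℝ)
    (hz : ∀ x : ℝ, z x =
      (1 / (2 * Real.sqrt ν)) * ∫ t : ℝ, Real.exp (-Real.sqrt ν * |x - t|) * y t) :
    ContDiff ℝ 2 z ∧ ∀ x : ℝ, ν * z x - deriv (deriv z) x = y x := by
  set a := Real.sqrt ν with ha_def
  have ha0 : 0 < a := Real.sqrt_pos.mpr hν
  have ha2 : a * a = ν := Real.mul_self_sqrt hν.le
  set c : ℝ := 1 / (2 * a) with hc_def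
  have h2ca : 2 * c * a = 1 := by rw [hc_def]; field_simp [ha0.ne']
  set gp : ℝ → ℝ := fun t => Real.exp (a * t) * y t with hgp_def
  set gm : ℝ → ℝ := fun t => Real.exp (-(a * t)) * y t with hgm_def
  have hgpc : Continuous gp :=
    (Real.continuous_exp.comp (continuous_const.mul continuous_id)).mul hyc
  have hgmc : Continuous gm :=
    (Real.continuous_exp.comp (continuous_const.mul continuous_id).neg).mul hyc
  -- integrability of gp on Iic x
  have hgpi : ∀ x : ℝ, IntegrableOn gp (Set.Iic x) := by
    intro x
    refine Integrable.mono' ((hyi.abs.const_mul (Real.exp (a * x))).restrict)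
      hgpc.aestronglyMeasurable.restrict ?_
    refine (ae_restrict_iff' measurableSet_Iic).mpr (ae_of_all _ fun t ht => ?_)
    rw [Real.norm_eq_abs, abs_mul, abs_of_pos (Real.exp_pos _)]
    exact mul_le_mul_of_nonneg_right
      (Real.exp_le_exp.mpr (mul_le_mul_of_nonneg_left ht ha0.le)) (abs_nonneg _)
  have hgmi : ∀ x : ℝ, IntegrableOn gm (Set.Ici x) := by
    intro x
    refine Integrable.mono' ((hyi.abs.const_mul (Real.exp (-(a * x)))).restrict)
      hgmc.aestronglyMeasurable.restrict ?_
    refine (ae_restrict_iff' measurableSet_Ici).mpr (ae_of_all _ fun t ht => ?_)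
    rw [Real.norm_eq_abs, abs_mul, abs_of_pos (Real.exp_pos _)]
    exact mul_le_mul_of_nonneg_right
      (Real.exp_le_exp.mpr (neg_le_neg (mul_le_mul_of_nonneg_left ht ha0.le))) (abs_nonneg _)
  -- integrability of the kernel
  have hki : ∀ x : ℝ, Integrable (fun t => Real.exp (-a * |x - t|) * y t) := by
    intro x
    refine Integrable.mono' hyi.abs
      (((Real.continuous_exp.comp
        (continuous_const.mul (continuous_const.sub continuous_id).abs)).mul hyc).aestronglyMeasurable)
      (ae_of_all _ fun t => ?_)
    rw [Real.norm_eq_abs, abs_mul, abs_of_pos (Real.exp_pos _)]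
    have h1 : Real.exp (-a * |x - t|) ≤ 1 := by
      rw [Real.exp_le_one_iff]
      exact mul_nonpos_of_nonpos_of_nonneg (neg_nonpos.mpr ha0.le) (abs_nonneg _)
    nlinarith [abs_nonneg (y t)]
  set A : ℝ → ℝ := fun x => ∫ t in Set.Iic x, gp t with hA_def
  set B : ℝ → ℝ := fun x => ∫ t in Set.Ici x, gm t with hB_def
  have hee : ∀ x : ℝ, Real.exp (-(a * x)) * Real.exp (a * x) = 1 := fun x => by
    rw [← Real.exp_add]; simp
  -- z in terms of A and B
  have hzeq : ∀ x : ℝ, z x = c * (Real.exp (-(a * x)) * A x + Real.exp (a * x) * B x) := by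
    intro x
    rw [hz x]
    congr 1
    rw [← intervalIntegral.integral_Iic_add_Ioi (b := x) ((hki x).integrableOn) ((hki x).integrableOn)]
    have h1 : ∫ t in Set.Iic x, Real.exp (-a * |x - t|) * y t
        = Real.exp (-(a * x)) * A x := by
      rw [hA_def, ← integral_const_mul]
      refine setIntegral_congr_fun measurableSet_Iic fun t ht => ?_
      rw [hgp_def]
      rw [abs_of_nonneg (by linarith [ht.out] : (0:ℝ) ≤ x - t)]
      rw [← mul_assoc, ← Real.exp_add]
      ring_nf
    have h2 : ∫ t in Set.Ioi x, Real.exp (-a * |x - t|) * y t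
        = Real.exp (a * x) * B x := by
      simp only [hB_def]
      rw [integral_Ici_eq_integral_Ioi, ← integral_const_mul]
      refine setIntegral_congr_fun measurableSet_Ioi fun t ht => ?_
      rw [hgm_def]
      rw [abs_of_nonpos (by linarith [ht.out] : x - t ≤ 0)]
      rw [← mul_assoc, ← Real.exp_add]
      ring_nf
    rw [h1, h2]
  -- derivatives of A and B
  have hAd : ∀ x : ℝ, HasDerivAt A (gp x) x := by
    intro x
    have h1 : HasDerivAt (fun u => (∫ t in Set.Iic (0:ℝ), gp t) + ∫ t in (0:ℝ)..u, gp t)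
        (gp x) x := by
      refine HasDerivAt.const_add _ ?_
      exact intervalIntegral.integral_hasDerivAt_right (hgpc.intervalIntegrable _ _)
        hgpc.aestronglyMeasurable.stronglyMeasurableAtFilter hgpc.continuousAt
    convert h1 using 1
    funext u
    simp only [hA_def]
    have := intervalIntegral.integral_Iic_sub_Iic (hgpi 0) (hgpi u)
    linarith [this]
  have hBd : ∀ x : ℝ, HasDerivAt B (-(gm x)) x := by
    intro x
    have h1 : HasDerivAt (fun u => (∫ t in Set.Ici (0:ℝ), gm t) - ∫ t in (0:ℝ)..u, gm t)
        (-(gm x)) x := by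
      refine HasDerivAt.const_sub _ ?_
      exact intervalIntegral.integral_hasDerivAt_right (hgmc.intervalIntegrable _ _)
        hgmc.aestronglyMeasurable.stronglyMeasurableAtFilter hgmc.continuousAt
    convert h1 using 1
    funext u
    simp only [hB_def]
    have := my_integral_Ici_sub_Ici (hgmi 0) (hgmi u)
    linarith [this]
  -- exponential derivatives
  have hEd : ∀ x : ℝ, HasDerivAt (fun x => Real.exp (a * x)) (Real.exp (a * x) * a) x :=
    fun x => by simpa using ((hasDerivAt_id x).const_mul a).exp
  have hFd : ∀ x : ℝ, HasDerivAt (fun x => Real.exp (-(a * x)))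
      (Real.exp (-(a * x)) * (-a)) x :=
    fun x => by simpa using (((hasDerivAt_id x).const_mul a).neg).exp
  set z₁ : ℝ → ℝ := fun x => c * a * (Real.exp (a * x) * B x - Real.exp (-(a * x)) * A x)
    with hz1_def
  have hzd : ∀ x : ℝ, HasDerivAt z (z₁ x) x := by
    intro x
    have h1 : HasDerivAt (fun x => c * (Real.exp (-(a * x)) * A x + Real.exp (a * x) * B x))
        (c * ((Real.exp (-(a * x)) * (-a) * A x + Real.exp (-(a * x)) * gp x)
          + (Real.exp (a * x) * a * B x + Real.exp (a * x) * (-(gm x))))) x :=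
      (((hFd x).mul (hAd x)).add ((hEd x).mul (hBd x))).const_mul c
    have h2 : (fun x => c * (Real.exp (-(a * x)) * A x + Real.exp (a * x) * B x)) = z :=
      funext fun u => (hzeq u).symm
    rw [h2] at h1
    convert h1 using 1
    rw [hz1_def, hgp_def, hgm_def]
    ring
  have hz1d : ∀ x : ℝ, HasDerivAt z₁ (ν * z x - y x) x := by
    intro x
    have h1 : HasDerivAt z₁
        ((c * a) * ((Real.exp (a * x) * a * B x + Real.exp (a * x) * (-(gm x)))
          - (Real.exp (-(a * x)) * (-a) * A x + Real.exp (-(a * x)) * gp x))) x :=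
      (((hEd x).mul (hBd x)).sub ((hFd x).mul (hAd x))).const_mul (c * a)
    convert h1 using 1
    rw [hzeq x]
    simp only [hgp_def, hgm_def]
    linear_combination (-(c * (Real.exp (-(a*x)) * A x + Real.exp (a*x) * B x))) * ha2
      + (2 * c * a * y x) * (hee x) + (y x) * h2ca
  have hdz : deriv z = z₁ := funext fun x => (hzd x).deriv
  have hdz1 : deriv z₁ = fun x => ν * z x - y x := funext fun x => (hz1d x).deriv
  have hzdiff : Differentiable ℝ z := fun x => (hzd x).differentiableAt
  have hz1diff : Differentiable ℝ z₁ := fun x => (hz1d x).differentiableAt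
  constructor
  · rw [show (2 : WithTop ℕ∞) = 1 + 1 from rfl, contDiff_succ_iff_deriv]
    refine ⟨hzdiff, by simp, ?_⟩
    rw [hdz, show (1 : WithTop ℕ∞) = 0 + 1 from rfl, contDiff_succ_iff_deriv]
    refine ⟨hz1diff, by simp, ?_⟩
    rw [hdz1, contDiff_zero]
    exact (continuous_const.mul hzdiff.continuous).sub hyc
  · intro x
    rw [hdz, hdz1]
    ring
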